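/- Let ζ = exp(2πi/9) ∈ ℂ. There do not exist natural numbers f₁, f₂, f₄, f₅, f₇, f₈ such that 1 + ζ + ζ² + ζ⁴ = 1 + ∑_{u ∈ {1,2,4,5,7,8}} f_u · ζ^u/(1 − ζ^u). -/

import Mathlib

private lemma pair_aux (a b : ℂ) (hab : a * b = 1) (ha : a ≠ 1) (hb : b ≠ 1) :
    a / (1 - a) + b / (1 - b) = -1 := by
  have ha' : (1 : ℂ) - a ≠ 0 := sub_ne_zero.2 (Ne.symm ha)
  have hb' : (1 : ℂ) - b ≠ 0 := sub_ne_zero.2 (Ne.symm hb)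
  field_simp
  linear_combination -hab

set_option maxHeartbeats 2000000 in
theorem no_eichler_solution_order_nine :
    ¬ ∃ f₁ f₂ f₄ f₅ f₇ f₈ : ℕ,
      letI ζ : ℂ := Complex.exp (2 * Real.pi * Complex.I / 9)
      (1 + ζ + ζ ^ 2 + ζ ^ 4 : ℂ) =
        1 + (f₁ : ℂ) * (ζ / (1 - ζ)) + (f₂ : ℂ) * (ζ ^ 2 / (1 - ζ ^ 2))
          + (f₄ : ℂ) * (ζ ^ 4 / (1 - ζ ^ 4)) + (f₅ : ℂ) * (ζ ^ 5 / (1 - ζ ^ 5))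
          + (f₇ : ℂ) * (ζ ^ 7 / (1 - ζ ^ 7)) + (f₈ : ℂ) * (ζ ^ 8 / (1 - ζ ^ 8)) := by
  rintro ⟨f₁, f₂, f₄, f₅, f₇, f₈, h⟩
  set ζ : ℂ := Complex.exp (2 * Real.pi * Complex.I / 9) with hζdef
  have hprim : IsPrimitiveRoot ζ 9 := Complex.isPrimitiveRoot_exp 9 (by norm_num)
  have hζ9 : ζ ^ 9 = 1 := hprim.pow_eq_one
  have hne : ∀ k : ℕ, 0 < k → k < 9 → ζ ^ k ≠ 1 := fun k h1 h2 =>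
    hprim.pow_ne_one_of_pos_of_lt h1.ne' h2
  have hne1 : ζ ≠ 1 := by simpa using hne 1 (by norm_num) (by norm_num)
  have hinv : ∀ u : ℕ, u ≤ 9 → (ζ ^ u)⁻¹ = ζ ^ (9 - u) := by
    intro u hu
    refine inv_eq_of_mul_eq_one_right ?_
    rw [← pow_add, Nat.add_sub_cancel' hu, hζ9]
  have i1 : ζ⁻¹ = ζ ^ 8 := by simpa using hinv 1 (by norm_num)
  have i2 : (ζ ^ 2)⁻¹ = ζ ^ 7 := hinv 2 (by norm_num)
  have i4 : (ζ ^ 4)⁻¹ = ζ ^ 5 := hinv 4 (by norm_num)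
  have i5 : (ζ ^ 5)⁻¹ = ζ ^ 4 := hinv 5 (by norm_num)
  have i7 : (ζ ^ 7)⁻¹ = ζ ^ 2 := hinv 7 (by norm_num)
  have i8 : (ζ ^ 8)⁻¹ = ζ := by simpa using hinv 8 (by norm_num)
  have hconj : (starRingEnd ℂ) ζ = ζ⁻¹ := by
    rw [hζdef, ← Complex.exp_conj, ← Complex.exp_neg]
    congr 1
    simp only [map_div₀, map_mul, map_ofNat, Complex.conj_I, Complex.conj_ofReal]
    ring
  have p2 : (ζ ^ 8) ^ 2 = ζ ^ 7 := by linear_combination (ζ ^ 7) * hζ9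
  have p4 : (ζ ^ 8) ^ 4 = ζ ^ 5 := by
    linear_combination (ζ ^ 23 + ζ ^ 14 + ζ ^ 5) * hζ9
  have p5 : (ζ ^ 8) ^ 5 = ζ ^ 4 := by
    linear_combination (ζ ^ 31 + ζ ^ 22 + ζ ^ 13 + ζ ^ 4) * hζ9
  have p7 : (ζ ^ 8) ^ 7 = ζ ^ 2 := by
    linear_combination (ζ ^ 47 + ζ ^ 38 + ζ ^ 29 + ζ ^ 20 + ζ ^ 11 + ζ ^ 2) * hζ9
  have p8 : (ζ ^ 8) ^ 8 = ζ := by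
    linear_combination (ζ ^ 55 + ζ ^ 46 + ζ ^ 37 + ζ ^ 28 + ζ ^ 19 + ζ ^ 10 + ζ) * hζ9
  -- conjugated equation
  have h2 : (1 + ζ ^ 8 + ζ ^ 7 + ζ ^ 5 : ℂ) =
      1 + (f₁ : ℂ) * (ζ ^ 8 / (1 - ζ ^ 8)) + (f₂ : ℂ) * (ζ ^ 7 / (1 - ζ ^ 7))
        + (f₄ : ℂ) * (ζ ^ 5 / (1 - ζ ^ 5)) + (f₅ : ℂ) * (ζ ^ 4 / (1 - ζ ^ 4))
        + (f₇ : ℂ) * (ζ ^ 2 / (1 - ζ ^ 2)) + (f₈ : ℂ) * (ζ / (1 - ζ)) := by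
    have := congrArg (starRingEnd ℂ) h
    simpa [map_add, map_mul, map_div₀, map_sub, map_one, map_pow, hconj, inv_pow,
      i1, i2, i4, i5, i7, i8, p2, p4, p5, p7, p8] using this
  -- sums of roots
  have S : ζ + ζ ^ 2 + ζ ^ 3 + ζ ^ 4 + ζ ^ 5 + ζ ^ 6 + ζ ^ 7 + ζ ^ 8 = -1 := by
    have hfac : (ζ - 1) * (ζ ^ 8 + ζ ^ 7 + ζ ^ 6 + ζ ^ 5 + ζ ^ 4 + ζ ^ 3 + ζ ^ 2 + ζ + 1) = 0 := by
      linear_combination hζ9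
    rcases mul_eq_zero.1 hfac with hc | hc
    · exact absurd (sub_eq_zero.1 hc) hne1
    · linear_combination hc
  have hc36 : ζ ^ 3 + ζ ^ 6 = -1 := by
    have hfac : (ζ ^ 3 - 1) * (ζ ^ 6 + ζ ^ 3 + 1) = 0 := by linear_combination hζ9
    rcases mul_eq_zero.1 hfac with hc | hc
    · exact absurd (sub_eq_zero.1 hc) (hne 3 (by norm_num) (by norm_num))
    · linear_combination hc
  -- pairings
  have P1 : ζ / (1 - ζ) + ζ ^ 8 / (1 - ζ ^ 8) = -1 := by
    have := pair_aux ζ (ζ ^ 8) (by rw [← pow_succ']; exact hζ9) hne1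
      (hne 8 (by norm_num) (by norm_num))
    simpa using this
  have P2 : ζ ^ 2 / (1 - ζ ^ 2) + ζ ^ 7 / (1 - ζ ^ 7) = -1 :=
    pair_aux _ _ (by rw [← pow_add]; exact hζ9) (hne 2 (by norm_num) (by norm_num))
      (hne 7 (by norm_num) (by norm_num))
  have P4 : ζ ^ 4 / (1 - ζ ^ 4) + ζ ^ 5 / (1 - ζ ^ 5) = -1 :=
    pair_aux _ _ (by rw [← pow_add]; exact hζ9) (hne 4 (by norm_num) (by norm_num))
      (hne 5 (by norm_num) (by norm_num))
  have key : ((f₁ : ℂ) + f₂ + f₄ + f₅ + f₇ + f₈) = 0 := by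
    linear_combination h + h2 + ((f₁ : ℂ) + f₈) * P1 + ((f₂ : ℂ) + f₇) * P2
      + ((f₄ : ℂ) + f₅) * P4 - S + hc36
  have key' : ((f₁ + f₂ + f₄ + f₅ + f₇ + f₈ : ℕ) : ℂ) = 0 := by push_cast; linear_combination key
  have hsum : f₁ + f₂ + f₄ + f₅ + f₇ + f₈ = 0 := Nat.cast_eq_zero.1 key'
  have hf1 : f₁ = 0 := by omega
  have hf2 : f₂ = 0 := by omega
  have hf4 : f₄ = 0 := by omega
  have hf5 : f₅ = 0 := by omega
  have hf7 : f₇ = 0 := by omega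
  have hf8 : f₈ = 0 := by omega
  subst hf1 hf2 hf4 hf5 hf7 hf8
  simp only [Nat.cast_zero, zero_mul, add_zero] at h
  have hzero : ζ + ζ ^ 2 + ζ ^ 4 = 0 := by linear_combination h
  -- imaginary parts
  have him : ∀ k : ℕ, (ζ ^ k).im = Real.sin (2 * Real.pi * k / 9) := by
    intro k
    rw [hζdef, ← Complex.exp_nat_mul]
    have : (k : ℂ) * (2 * (Real.pi : ℂ) * Complex.I / 9) =
        ((2 * Real.pi * k / 9 : ℝ) : ℂ) * Complex.I := by push_cast; ring
    rw [this, Complex.exp_ofReal_mul_I_im]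
  have e1 : (ζ).im = Real.sin (2 * Real.pi * 1 / 9) := by simpa using him 1
  have e2 : (ζ ^ 2).im = Real.sin (2 * Real.pi * 2 / 9) := him 2
  have e4 : (ζ ^ 4).im = Real.sin (2 * Real.pi * 4 / 9) := him 4
  have pipos := Real.pi_pos
  have s1 : 0 < Real.sin (2 * Real.pi * 1 / 9) :=
    Real.sin_pos_of_pos_of_lt_pi (by linarith) (by linarith)
  have s2 : 0 < Real.sin (2 * Real.pi * 2 / 9) :=
    Real.sin_pos_of_pos_of_lt_pi (by linarith) (by linarith)
  have s4 : 0 < Real.sin (2 * Real.pi * 4 / 9) :=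
    Real.sin_pos_of_pos_of_lt_pi (by linarith) (by linarith)
  have := congrArg Complex.im hzero
  simp only [Complex.add_im, Complex.zero_im, e1, e2, e4] at this
  linarith
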